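/- For n ≥ 2 and adjacent residues i, j = i+1 in ℤ/nℤ (with n ≥ 3 so that i−1 ≠ i+1), the operators E_i, E_j on Fock space satisfy the Serre relation E_i² E_j − 2 E_i E_j E_i + E_j E_i² = 0 evaluated on every charged partition basis vector ⟨γ|. -/

import Mathlib

/-- A charged partition: an integer charge together with a partition
(weakly decreasing, eventually zero sequence of naturals). -/
structure ChargedPartition where
  charge : ℤ
  parts : ℕ → ℕ
  antitone : ∀ ⦃i j : ℕ⦄, i ≤ j → parts j ≤ parts i
  eventually_zero : ∃ N : ℕ, ∀ j : ℕ, N ≤ j → parts j = 0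

/-- `AddBox γ μ k` : μ is obtained from γ by adding one box of (integer) content `k`
(content = charge + column − row). -/
def AddBox (γ μ : ChargedPartition) (k : ℤ) : Prop :=
  μ.charge = γ.charge ∧
  ∃ r : ℕ, μ.parts = Function.update γ.parts r (γ.parts r + 1) ∧
    (γ.charge + (γ.parts r : ℤ) - (r : ℤ)) = k

/-- `RemoveBox γ μ k` : μ is obtained from γ by removing one box of content `k`. -/
def RemoveBox (γ μ : ChargedPartition) (k : ℤ) : Prop := AddBox μ γ k

/-- Removing one box whose color (content mod n) is `i`. -/
def RemoveBoxC (n : ℕ) (γ μ : ChargedPartition) (i : ZMod n) : Prop :=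
  ∃ k : ℤ, (k : ZMod n) = i ∧ RemoveBox γ μ k

/-- Adding one box whose color (content mod n) is `i`. -/
def AddBoxC (n : ℕ) (γ μ : ChargedPartition) (i : ZMod n) : Prop :=
  ∃ k : ℤ, (k : ZMod n) = i ∧ AddBox γ μ k

/-- Fermionic Fock space: the free ℂ-vector space on charged partitions. -/
abbrev Fock := ChargedPartition →₀ ℂ

/-- The Chevalley operator `E i` : ⟨γ|E_i = Σ ⟨μ| over μ obtained from γ by
removing one i-colored box. -/
noncomputable def Eop (n : ℕ) (i : ZMod n) : Fock →ₗ[ℂ] Fock :=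
  Finsupp.lift Fock ℂ ChargedPartition
    (fun γ => ∑ᶠ μ ∈ {μ : ChargedPartition | RemoveBoxC n γ μ i}, Finsupp.single μ (1 : ℂ))

/-- The Chevalley operator `F i` : ⟨γ|F_i = Σ ⟨μ| over μ obtained from γ by
adding one i-colored box. -/
noncomputable def Fop (n : ℕ) (i : ZMod n) : Fock →ₗ[ℂ] Fock :=
  Finsupp.lift Fock ℂ ChargedPartition
    (fun γ => ∑ᶠ μ ∈ {μ : ChargedPartition | AddBoxC n γ μ i}, Finsupp.single μ (1 : ℂ))

lemma CP.ext' {μ ν : ChargedPartition} (hc : μ.charge = ν.charge) (hp : μ.parts = ν.parts) :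
    μ = ν := by
  cases μ; cases ν; simp_all

lemma removeBox_iff (γ μ : ChargedPartition) (k : ℤ) :
    RemoveBox γ μ k ↔ μ.charge = γ.charge ∧ ∃ r : ℕ,
      γ.parts (r+1) < γ.parts r ∧
      μ.parts = Function.update γ.parts r (γ.parts r - 1) ∧
      γ.charge + (γ.parts r : ℤ) - 1 - (r : ℤ) = k := by
  constructor
  · rintro ⟨hc, r, hupd, hk⟩
    have h1 : γ.parts r = μ.parts r + 1 := by rw [hupd, Function.update_self]
    have h2 : ∀ s, s ≠ r → γ.parts s = μ.parts s := by
      intro s hs; rw [hupd, Function.update_of_ne hs]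
    have hmono : μ.parts (r+1) ≤ μ.parts r := μ.antitone (by omega)
    have h3 : γ.parts (r+1) = μ.parts (r+1) := h2 _ (Nat.succ_ne_self r)
    refine ⟨hc.symm, r, by omega, ?_, by rw [hc]; omega⟩
    funext s
    by_cases hs : s = r
    · subst hs; rw [Function.update_self]; omega
    · rw [Function.update_of_ne hs, h2 s hs]
  · rintro ⟨hc, r, hlt, hupd, hk⟩
    have h1 : μ.parts r = γ.parts r - 1 := by rw [hupd, Function.update_self]
    refine ⟨hc.symm, r, ?_, by rw [hc]; omega⟩
    funext s
    by_cases hs : s = r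
    · subst hs; rw [Function.update_self]; omega
    · rw [Function.update_of_ne hs, hupd, Function.update_of_ne hs]

/-- From a removal: all the numeric data, with `μ.parts` expressed via `γ`. -/
lemma removeBox_elim {γ μ : ChargedPartition} {k : ℤ} (h : RemoveBox γ μ k) :
    ∃ r : ℕ, μ.charge = γ.charge ∧ γ.parts (r+1) < γ.parts r ∧
      (∀ s, s ≠ r → μ.parts s = γ.parts s) ∧ μ.parts r + 1 = γ.parts r ∧
      γ.charge + (γ.parts r : ℤ) - 1 - (r : ℤ) = k := by
  obtain ⟨hc, r, hlt, hupd, hk⟩ := (removeBox_iff γ μ k).1 h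
  exact ⟨r, hc, hlt, fun s hs => by rw [hupd, Function.update_of_ne hs],
    by rw [hupd, Function.update_self]; omega, hk⟩

/-- uniqueness of the removed partition for a fixed content. -/
lemma removeBox_unique {γ μ ν : ChargedPartition} {k : ℤ}
    (h1 : RemoveBox γ μ k) (h2 : RemoveBox γ ν k) : μ = ν := by
  obtain ⟨r, hc, hlt, ho, hr, hk⟩ := removeBox_elim h1
  obtain ⟨r', hc', hlt', ho', hr', hk'⟩ := removeBox_elim h2
  have hrr : r = r' := by
    rcases lt_trichotomy r r' with h | h | h
    · have := γ.antitone h.le; omega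
    · exact h
    · have := γ.antitone h.le; omega
  subst hrr
  refine CP.ext' (hc.trans hc'.symm) (funext fun s => ?_)
  by_cases hs : s = r
  · subst hs; omega
  · rw [ho s hs, ho' s hs]

/-- uniqueness of the content for a fixed removal result. -/
lemma removeBox_content_unique {γ μ : ChargedPartition} {k k' : ℤ}
    (h1 : RemoveBox γ μ k) (h2 : RemoveBox γ μ k') : k = k' := by
  obtain ⟨r, hc, hlt, ho, hr, hk⟩ := removeBox_elim h1
  obtain ⟨r', hc', hlt', ho', hr', hk'⟩ := removeBox_elim h2
  have hrr : r = r' := by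
    by_contra hne
    have e1 := ho r' (Ne.symm hne)
    have e2 := ho' r hne
    omega
  subst hrr; omega

/-- No two removals of the same content in a row. -/
lemma no_double {γ μ ν : ChargedPartition} {k : ℤ}
    (h1 : RemoveBox γ μ k) (h2 : RemoveBox μ ν k) : False := by
  obtain ⟨r, hc, hlt, ho, hr, hk⟩ := removeBox_elim h1
  obtain ⟨r', hc', hlt', ho', hr', hk'⟩ := removeBox_elim h2
  by_cases hrr : r' = r
  · subst hrr; omega
  · have e := ho r' hrr
    rcases lt_trichotomy r r' with h | h | h
    · have := γ.antitone h.le; omega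
    · exact hrr h.symm
    · have := γ.antitone h.le; omega


/-- Remove the corner box in row `r`. -/
def del (γ : ChargedPartition) (r : ℕ) (h : γ.parts (r+1) < γ.parts r) : ChargedPartition where
  charge := γ.charge
  parts := Function.update γ.parts r (γ.parts r - 1)
  antitone := by
    intro a b hab
    by_cases ha : a = r <;> by_cases hb : b = r
    · rw [ha, hb]
    · rw [Function.update_of_ne hb, ha, Function.update_self]
      have h1 : γ.parts b ≤ γ.parts (r+1) := γ.antitone (by omega)
      omega
    · rw [Function.update_of_ne ha, hb, Function.update_self]
      have h1 : γ.parts r ≤ γ.parts a := γ.antitone (by omega)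
      omega
    · rw [Function.update_of_ne ha, Function.update_of_ne hb]
      exact γ.antitone hab
  eventually_zero := by
    obtain ⟨N, hN⟩ := γ.eventually_zero
    exact ⟨N + r + 1, fun s hs => by
      rw [Function.update_of_ne (by omega)]; exact hN s (by omega)⟩

lemma del_removeBox (γ : ChargedPartition) (r : ℕ) (h : γ.parts (r+1) < γ.parts r) :
    RemoveBox γ (del γ r h) (γ.charge + (γ.parts r : ℤ) - 1 - (r : ℤ)) :=
  (removeBox_iff _ _ _).2 ⟨rfl, r, h, rfl, rfl⟩

/-- Existence of a removal at the content of any removable corner. -/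
lemma exists_removeBox (γ : ChargedPartition) (r : ℕ) (h : γ.parts (r+1) < γ.parts r) :
    ∃ μ, RemoveBox γ μ (γ.charge + (γ.parts r : ℤ) - 1 - (r : ℤ)) :=
  ⟨del γ r h, del_removeBox γ r h⟩

/-- The diamond/commutation lemma: removals at non-adjacent, distinct contents commute. -/
lemma swap_chain {γ μ ν : ChargedPartition} {k m : ℤ}
    (hm1 : m ≠ k - 1) (hm3 : m ≠ k + 1)
    (h1 : RemoveBox γ μ k) (h2 : RemoveBox μ ν m) :
    ∃ μ', RemoveBox γ μ' m ∧ RemoveBox μ' ν k := by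
  obtain ⟨r1, hc1, hlt1, ho1, hr1, hk1⟩ := removeBox_elim h1
  obtain ⟨r2, hc2, hlt2, ho2, hr2, hk2⟩ := removeBox_elim h2
  have hne : r2 ≠ r1 := by
    intro hrr; subst hrr; omega
  have epr2 : μ.parts r2 = γ.parts r2 := ho1 r2 hne
  have h' : γ.parts (r2+1) < γ.parts r2 := by
    by_cases hadj : r2 + 1 = r1
    · have e1 : μ.parts (r2+1) = μ.parts r1 := by rw [hadj]
      have e2 : γ.parts (r2+1) = γ.parts r1 := by rw [hadj]
      omega
    · have e1 : μ.parts (r2+1) = γ.parts (r2+1) := ho1 _ hadj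
      omega
  refine ⟨del γ r2 h', ?_, ?_⟩
  · have := del_removeBox γ r2 h'
    have hm : γ.charge + (γ.parts r2 : ℤ) - 1 - (r2 : ℤ) = m := by omega
    rwa [hm] at this
  · refine (removeBox_iff _ _ _).2 ⟨?_, r1, ?_, ?_, ?_⟩
    · show ν.charge = γ.charge
      omega
    · show (del γ r2 h').parts (r1+1) < (del γ r2 h').parts r1
      show Function.update γ.parts r2 (γ.parts r2 - 1) (r1+1)
          < Function.update γ.parts r2 (γ.parts r2 - 1) r1
      rw [Function.update_of_ne (Ne.symm hne)]
      by_cases hadj : r1 + 1 = r2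
      · have e2 : γ.parts (r1+1) = γ.parts r2 := by rw [hadj]
        rw [hadj, Function.update_self]; omega
      · rw [Function.update_of_ne hadj]; omega
    · funext s
      show ν.parts s = Function.update (Function.update γ.parts r2 (γ.parts r2 - 1)) r1
          (Function.update γ.parts r2 (γ.parts r2 - 1) r1 - 1) s
      by_cases hs1 : s = r1
      · rw [hs1, Function.update_self, Function.update_of_ne (Ne.symm hne)]
        have e1 : ν.parts r1 = μ.parts r1 := ho2 _ (fun hh => hne hh.symm)
        omega
      · rw [Function.update_of_ne hs1]
        by_cases hs2 : s = r2
        · subst hs2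
          rw [Function.update_self]
          omega
        · rw [Function.update_of_ne hs2]
          rw [ho2 s hs2, ho1 s hs1]
    · show (del γ r2 h').charge + ((del γ r2 h').parts r1 : ℤ) - 1 - (r1 : ℤ) = k
      show γ.charge + ((Function.update γ.parts r2 (γ.parts r2 - 1)) r1 : ℤ) - 1 - (r1 : ℤ) = k
      rw [Function.update_of_ne (Ne.symm hne)]
      omega

/-- No chain removing contents `k`, `k+1`, `k`. -/
lemma no_zigzag {γ μ ν ρ : ChargedPartition} {k : ℤ}
    (h1 : RemoveBox γ μ k) (h2 : RemoveBox μ ν (k+1)) (h3 : RemoveBox ν ρ k) : False := by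
  obtain ⟨r1, hc1, hlt1, ho1, hr1, hk1⟩ := removeBox_elim h1
  obtain ⟨r2, hc2, hlt2, ho2, hr2, hk2⟩ := removeBox_elim h2
  obtain ⟨r3, hc3, hlt3, ho3, hr3, hk3⟩ := removeBox_elim h3
  have hne : r2 ≠ r1 := by intro hrr; subst hrr; omega
  have epr2 : μ.parts r2 = γ.parts r2 := ho1 r2 hne
  have hstep : r1 = r2 + 1 ∧ γ.parts r2 = γ.parts r1 := by
    rcases lt_trichotomy r1 r2 with h | h | h
    · have := γ.antitone h.le; omega
    · exact absurd h.symm hne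
    · have := γ.antitone h.le; omega
  obtain ⟨hr12, hpp⟩ := hstep
  have ev1 : ν.parts r1 = γ.parts r1 - 1 := by
    have := ho2 r1 (Ne.symm hne); omega
  have ev2 : ν.parts r2 = γ.parts r2 - 1 := by omega
  by_cases h31 : r3 = r1
  · subst h31; omega
  · by_cases h32 : r3 = r2
    · subst h32
      have : ν.parts (r3 + 1) = ν.parts r1 := by rw [hr12]
      omega
    · have e3 : ν.parts r3 = γ.parts r3 := by
        rw [ho2 r3 h32, ho1 r3 h31]
      rcases lt_trichotomy r3 r1 with h | h | h
      · have := γ.antitone h.le; omega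
      · exact h31 h
      · have := γ.antitone h.le; omega

open Classical in
/-- Partial removal of a box of content `k`, as an `Option`. -/
noncomputable def rem (k : ℤ) (γ : ChargedPartition) : Option ChargedPartition :=
  if h : ∃ μ, RemoveBox γ μ k then some h.choose else none

lemma rem_eq_some_iff {k : ℤ} {γ μ : ChargedPartition} :
    rem k γ = some μ ↔ RemoveBox γ μ k := by
  unfold rem
  split_ifs with h
  · simp only [Option.some.injEq]
    constructor
    · rintro rfl; exact h.choose_spec
    · intro hμ; exact removeBox_unique h.choose_spec hμ
  · simp only [reduceCtorEq, false_iff]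
    intro hr; exact h ⟨μ, hr⟩

lemma rem_comm {k m : ℤ} (hm1 : m ≠ k - 1) (hm3 : m ≠ k + 1) (o : Option ChargedPartition) :
    (o.bind (rem k)).bind (rem m) = (o.bind (rem m)).bind (rem k) := by
  cases o with
  | none => rfl
  | some γ =>
    apply Option.ext
    intro ν
    simp only [Option.mem_def, Option.bind_some, Option.bind_eq_some_iff, rem_eq_some_iff]
    constructor
    · rintro ⟨μ, h1, h2⟩
      exact swap_chain hm1 hm3 h1 h2
    · rintro ⟨μ, h1, h2⟩
      exact swap_chain (by omega) (by omega) h1 h2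

lemma rem_rem_none (k : ℤ) (o : Option ChargedPartition) :
    (o.bind (rem k)).bind (rem k) = none := by
  cases o with
  | none => rfl
  | some γ =>
    rw [Option.eq_none_iff_forall_not_mem]
    intro ν
    simp only [Option.mem_def, Option.bind_some, Option.bind_eq_some_iff, rem_eq_some_iff]
    rintro ⟨μ, h1, h2⟩
    exact no_double h1 h2

lemma rem_zigzag_none (k : ℤ) (o : Option ChargedPartition) :
    (((o.bind (rem k)).bind (rem (k+1))).bind (rem k)) = none := by
  cases o with
  | none => rfl
  | some γ =>
    rw [Option.eq_none_iff_forall_not_mem]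
    intro ρ
    simp only [Option.mem_def, Option.bind_some, Option.bind_eq_some_iff, rem_eq_some_iff]
    rintro ⟨ν, ⟨μ, h1, h2⟩, h3⟩
    exact no_zigzag h1 h2 h3

/-- Two integers congruent mod `n ≥ 3` that are distinct are also not adjacent. -/
lemma far_of_cast_eq {n : ℕ} (hn : 3 ≤ n) {a b : ℤ} (h : (b : ZMod n) = (a : ZMod n))
    (hne : b ≠ a) : b ≠ a - 1 ∧ b ≠ a + 1 := by
  have hd : (n : ℤ) ∣ (b - a) := by
    rw [← ZMod.intCast_zmod_eq_zero_iff_dvd]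
    push_cast
    rw [h]; ring
  constructor <;> intro e
  · have h2 : b - a = -1 := by omega
    rw [h2] at hd
    have := Int.eq_zero_of_dvd_of_natAbs_lt_natAbs hd (by simp; omega)
    omega
  · have h2 : b - a = 1 := by omega
    rw [h2] at hd
    have := Int.eq_zero_of_dvd_of_natAbs_lt_natAbs hd (by simp; omega)
    omega

/-- If `b ≡ a + 1 (mod n)`, `n ≥ 3`, and `b ≠ a + 1`, then `b` is far from `a`. -/
lemma far_of_cast_succ {n : ℕ} (hn : 3 ≤ n) {a b : ℤ} (h : (b : ZMod n) = (a : ZMod n) + 1)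
    (hne : b ≠ a + 1) : b ≠ a - 1 ∧ b ≠ a := by
  have hd : (n : ℤ) ∣ (b - a - 1) := by
    rw [← ZMod.intCast_zmod_eq_zero_iff_dvd]
    push_cast
    rw [h]; ring
  constructor <;> intro e
  · have h2 : b - a - 1 = -2 := by omega
    rw [h2] at hd
    have := Int.eq_zero_of_dvd_of_natAbs_lt_natAbs hd (by simp; omega)
    omega
  · have h2 : b - a - 1 = -1 := by omega
    rw [h2] at hd
    have := Int.eq_zero_of_dvd_of_natAbs_lt_natAbs hd (by simp; omega)
    omega

noncomputable def optv : Option ChargedPartition → Fock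
  | none => 0
  | some μ => Finsupp.single μ 1

@[simp] lemma optv_none : optv none = 0 := rfl
@[simp] lemma optv_some (μ : ChargedPartition) : optv (some μ) = Finsupp.single μ 1 := rfl

def SubCP (γ μ : ChargedPartition) : Prop := μ.charge = γ.charge ∧ ∀ r, μ.parts r ≤ γ.parts r

lemma subCP_refl (γ : ChargedPartition) : SubCP γ γ := ⟨rfl, fun _ => le_refl _⟩

lemma subCP_of_removeBox {γ μ' μ : ChargedPartition} {k : ℤ}
    (h : RemoveBox μ' μ k) (hs : SubCP γ μ') : SubCP γ μ := by
  obtain ⟨r, hc, hlt, ho, hr, hk⟩ := removeBox_elim h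
  refine ⟨hc.trans hs.1, fun s => ?_⟩
  by_cases hsr : s = r
  · have h2 := hs.2 r
    rw [hsr]
    omega
  · rw [ho s hsr]; exact hs.2 s

lemma subCP_bind {γ : ChargedPartition} {o : Option ChargedPartition}
    (ho : ∀ μ, o = some μ → SubCP γ μ) (k : ℤ) :
    ∀ μ, o.bind (rem k) = some μ → SubCP γ μ := by
  intro μ h
  rw [Option.bind_eq_some_iff] at h
  obtain ⟨μ', h1, h2⟩ := h
  exact subCP_of_removeBox (rem_eq_some_iff.1 h2) (ho μ' h1)

open Classical in
/-- The window of possible removable contents of color `c`, inside the diagram of `γ`. -/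
noncomputable def TS (n : ℕ) (c : ZMod n) (γ : ChargedPartition) (N : ℕ) : Finset ℤ :=
  (Finset.Icc (γ.charge - (N : ℤ)) (γ.charge + (γ.parts 0 : ℤ))).filter
    (fun k => (k : ZMod n) = c)

lemma mem_TS_cast {n : ℕ} {c : ZMod n} {γ : ChargedPartition} {N : ℕ} {k : ℤ}
    (h : k ∈ TS n c γ N) : (k : ZMod n) = c := by
  classical
  exact (Finset.mem_filter.1 h).2

lemma mem_window {γ : ChargedPartition} (N : ℕ) (hN : ∀ s, N ≤ s → γ.parts s = 0)
    {μ ν : ChargedPartition} {k : ℤ} (hsub : SubCP γ μ) (h : RemoveBox μ ν k) :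
    k ∈ Finset.Icc (γ.charge - (N : ℤ)) (γ.charge + (γ.parts 0 : ℤ)) := by
  obtain ⟨r, hc, hlt, ho, hr, hk⟩ := removeBox_elim h
  have h0 : μ.parts r ≤ γ.parts r := hsub.2 r
  have h1 : γ.parts r ≤ γ.parts 0 := γ.antitone (Nat.zero_le r)
  have h2 : r < N := by
    by_contra hrN
    have := hN r (by omega)
    omega
  have hch : μ.charge = γ.charge := hsub.1
  rw [Finset.mem_Icc]
  omega

lemma eop_single_eq {n : ℕ} (c : ZMod n) {γ : ChargedPartition} (N : ℕ)
    (hN : ∀ s, N ≤ s → γ.parts s = 0) {μ : ChargedPartition} (hsub : SubCP γ μ) :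
    Eop n c (Finsupp.single μ (1:ℂ)) = ∑ k ∈ TS n c γ N, optv (rem k μ) := by
  classical
  have hE : Eop n c (Finsupp.single μ (1:ℂ))
      = ∑ᶠ ν ∈ {ν : ChargedPartition | RemoveBoxC n μ ν c}, Finsupp.single ν (1:ℂ) := by
    simp only [Eop, Finsupp.lift_apply]
    rw [Finsupp.sum_single_index, one_smul]
    exact zero_smul _ _
  rw [hE]
  have hKsum : ∑ k ∈ TS n c γ N, optv (rem k μ)
      = ∑ k ∈ (TS n c γ N).filter (fun k => ∃ ν, RemoveBox μ ν k), optv (rem k μ) := by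
    refine (Finset.sum_subset (Finset.filter_subset _ _) ?_).symm
    intro k hk hnk
    have hno : ¬ ∃ ν, RemoveBox μ ν k := by
      intro hex; exact hnk (Finset.mem_filter.2 ⟨hk, hex⟩)
    have : rem k μ = none := dif_neg hno
    rw [this, optv_none]
  rw [hKsum, ← finsum_mem_coe_finset]
  refine (finsum_mem_eq_of_bijOn (fun k => (rem k μ).getD μ) ⟨?_, ?_, ?_⟩ ?_).symm
  · -- MapsTo
    intro k hk
    rw [Finset.mem_coe, Finset.mem_filter] at hk
    obtain ⟨hTS, ν, hrem⟩ := hk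
    have hsome : rem k μ = some ν := rem_eq_some_iff.2 hrem
    show (rem k μ).getD μ ∈ {ν : ChargedPartition | RemoveBoxC n μ ν c}
    rw [hsome, Option.getD_some]
    exact ⟨k, mem_TS_cast hTS, hrem⟩
  · -- InjOn
    intro k hk k' hk' he
    rw [Finset.mem_coe, Finset.mem_filter] at hk hk'
    obtain ⟨hTS, ν, hrem⟩ := hk
    obtain ⟨hTS', ν', hrem'⟩ := hk'
    dsimp only at he
    rw [rem_eq_some_iff.2 hrem, rem_eq_some_iff.2 hrem', Option.getD_some,
      Option.getD_some] at he
    subst he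
    exact removeBox_content_unique hrem hrem'
  · -- SurjOn
    intro ν hν
    obtain ⟨k, hcol, hrem⟩ := hν
    refine ⟨k, ?_, ?_⟩
    · rw [Finset.mem_coe, Finset.mem_filter]
      refine ⟨Finset.mem_filter.2 ⟨mem_window N hN hsub hrem, hcol⟩, ν, hrem⟩
    · dsimp only
      rw [rem_eq_some_iff.2 hrem, Option.getD_some]
  · -- values
    intro k hk
    rw [Finset.mem_coe, Finset.mem_filter] at hk
    obtain ⟨hTS, ν, hrem⟩ := hk
    rw [rem_eq_some_iff.2 hrem, Option.getD_some, optv_some]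

lemma eop_optv {n : ℕ} (c : ZMod n) {γ : ChargedPartition} (N : ℕ)
    (hN : ∀ s, N ≤ s → γ.parts s = 0) (o : Option ChargedPartition)
    (ho : ∀ μ, o = some μ → SubCP γ μ) :
    Eop n c (optv o) = ∑ k ∈ TS n c γ N, optv (o.bind (rem k)) := by
  cases o with
  | none =>
    simp only [optv_none, map_zero, Option.bind_none, Finset.sum_const_zero]
  | some μ =>
    rw [optv_some, eop_single_eq c N hN (ho μ rfl)]
    exact Finset.sum_congr rfl (fun k _ => by rw [Option.bind_some])

noncomputable def C3 (γ : ChargedPartition) (a b c : ℤ) : Option ChargedPartition :=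
  (((some γ : Option ChargedPartition).bind (rem a)).bind (rem b)).bind (rem c)

lemma triple_eq {n : ℕ} {γ : ChargedPartition} (N : ℕ) (hN : ∀ s, N ≤ s → γ.parts s = 0)
    (a b c : ZMod n) :
    Eop n c (Eop n b (Eop n a (Finsupp.single γ (1:ℂ)))) =
      ∑ x ∈ TS n a γ N, ∑ y ∈ TS n b γ N, ∑ z ∈ TS n c γ N, optv (C3 γ x y z) := by
  have hγ : ∀ μ, (some γ : Option ChargedPartition) = some μ → SubCP γ μ := by
    intro μ h
    have h2 := Option.some.inj h
    subst h2
    exact subCP_refl γ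
  have h1 : Eop n a (Finsupp.single γ (1:ℂ))
      = ∑ x ∈ TS n a γ N, optv ((some γ : Option ChargedPartition).bind (rem x)) := by
    have h := eop_optv a N hN (some γ) hγ
    rwa [optv_some] at h
  rw [h1, map_sum]
  have h2 : ∀ x ∈ TS n a γ N, Eop n b (optv ((some γ : Option ChargedPartition).bind (rem x)))
      = ∑ y ∈ TS n b γ N, optv (((some γ : Option ChargedPartition).bind (rem x)).bind (rem y)) :=
    fun x _ => eop_optv b N hN _ (subCP_bind hγ x)
  rw [Finset.sum_congr rfl h2, map_sum]
  refine Finset.sum_congr rfl (fun x hx => ?_)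
  rw [map_sum]
  refine Finset.sum_congr rfl (fun y hy => ?_)
  exact eop_optv c N hN _ (subCP_bind (subCP_bind hγ x) y)

noncomputable def Gv (γ : ChargedPartition) (l a b : ℤ) : Fock :=
  optv (C3 γ a b l) - (2:ℂ) • optv (C3 γ a l b) + optv (C3 γ l a b)

lemma core_far {γ : ChargedPartition} {k1 k2 l : ℤ}
    (h11 : l ≠ k1 - 1) (h13 : l ≠ k1 + 1)
    (h21 : l ≠ k2 - 1) (h23 : l ≠ k2 + 1) :
    Gv γ l k1 k2 = 0 := by
  have e1 : C3 γ k1 k2 l = C3 γ k1 l k2 :=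
    rem_comm h21 h23 ((some γ : Option ChargedPartition).bind (rem k1))
  have e2 : C3 γ k1 l k2 = C3 γ l k1 k2 := by
    unfold C3
    rw [rem_comm h11 h13 (some γ : Option ChargedPartition)]
  rw [Gv, e1, e2]
  module

lemma core_adj {γ : ChargedPartition} {k1 k2 l : ℤ} (hadj : l = k1 + 1)
    (h21 : l ≠ k2 - 1) (h23 : l ≠ k2 + 1)
    (h121 : k1 ≠ k2 - 1) (h123 : k1 ≠ k2 + 1) :
    Gv γ l k1 k2 + Gv γ l k2 k1 = 0 := by
  have e1 : C3 γ k1 k2 l = C3 γ k1 l k2 :=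
    rem_comm h21 h23 ((some γ : Option ChargedPartition).bind (rem k1))
  have e2 : C3 γ k2 k1 l = C3 γ k1 l k2 := by
    unfold C3
    rw [rem_comm h121 h123 (some γ : Option ChargedPartition)]
    exact rem_comm h21 h23 ((some γ : Option ChargedPartition).bind (rem k1))
  have e3 : C3 γ k2 l k1 = C3 γ l k1 k2 := by
    unfold C3
    rw [rem_comm h21 h23 (some γ : Option ChargedPartition)]
    exact rem_comm h121 h123 ((some γ : Option ChargedPartition).bind (rem l))
  have e4 : C3 γ l k2 k1 = C3 γ l k1 k2 :=
    rem_comm h121 h123 ((some γ : Option ChargedPartition).bind (rem l))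
  rw [Gv, Gv, e1, e2, e3, e4]
  module

lemma core_diag {γ : ChargedPartition} {k l : ℤ}
    (h : l = k + 1 ∨ (l ≠ k - 1 ∧ l ≠ k + 1)) :
    Gv γ l k k = 0 := by
  have hA : C3 γ k k l = none := by
    unfold C3
    rw [rem_rem_none k (some γ : Option ChargedPartition), Option.bind_none]
  have hC : C3 γ l k k = none :=
    rem_rem_none k ((some γ : Option ChargedPartition).bind (rem l))
  have hB : C3 γ k l k = none := by
    rcases h with rfl | ⟨h1, h3⟩
    · exact rem_zigzag_none k (some γ : Option ChargedPartition)
    · have e : C3 γ k l k = C3 γ k k l :=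
        rem_comm (by omega) (by omega) ((some γ : Option ChargedPartition).bind (rem k))
      rw [e, hA]
  rw [Gv, hA, hB, hC, optv_none]
  simp

lemma core_main {n : ℕ} (hn : 3 ≤ n) {i j : ZMod n} (hj : j = i + 1) {k1 k2 l : ℤ}
    (hk1 : (k1 : ZMod n) = i) (hk2 : (k2 : ZMod n) = i) (hl : (l : ZMod n) = j)
    (γ : ChargedPartition) : Gv γ l k1 k2 + Gv γ l k2 k1 = 0 := by
  have hl1 : (l : ZMod n) = (k1 : ZMod n) + 1 := by rw [hl, hj, hk1]
  have hl2 : (l : ZMod n) = (k2 : ZMod n) + 1 := by rw [hl, hj, hk2]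
  by_cases hkk : k1 = k2
  · subst hkk
    have hd : l = k1 + 1 ∨ (l ≠ k1 - 1 ∧ l ≠ k1 + 1) := by
      by_cases hadj : l = k1 + 1
      · exact Or.inl hadj
      · have := far_of_cast_succ hn hl1 hadj
        exact Or.inr ⟨this.1, hadj⟩
    rw [core_diag hd, add_zero]
  · by_cases h1 : l = k1 + 1
    · have hne2 : l ≠ k2 + 1 := by omega
      have far2 := far_of_cast_succ hn hl2 hne2
      have far12 := far_of_cast_eq hn (show (k2 : ZMod n) = (k1 : ZMod n) by rw [hk2, hk1])
        (fun h => hkk h.symm)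
      exact core_adj h1 far2.1 hne2 (by omega) (by omega)
    · by_cases h2 : l = k2 + 1
      · rw [add_comm]
        have far1 := far_of_cast_succ hn hl1 h1
        have far12 := far_of_cast_eq hn (show (k1 : ZMod n) = (k2 : ZMod n) by rw [hk1, hk2])
          hkk
        exact core_adj h2 far1.1 h1 (by omega) (by omega)
      · have far1 := far_of_cast_succ hn hl1 h1
        have far2 := far_of_cast_succ hn hl2 h2
        rw [core_far far1.1 h1 far2.1 h2, core_far far2.1 h2 far1.1 h1, add_zero]

lemma sum3_combine {A B : Finset ℤ} (f g h : ℤ → ℤ → ℤ → Fock) :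
    ((∑ x ∈ A, ∑ y ∈ A, ∑ z ∈ B, f x y z)
      - (2:ℂ) • (∑ x ∈ A, ∑ y ∈ A, ∑ z ∈ B, g x y z))
      + (∑ x ∈ A, ∑ y ∈ A, ∑ z ∈ B, h x y z)
    = ∑ x ∈ A, ∑ y ∈ A, ∑ z ∈ B, ((f x y z - (2:ℂ) • g x y z) + h x y z) := by
  simp only [Finset.smul_sum, ← Finset.sum_sub_distrib, ← Finset.sum_add_distrib]

lemma double_sum_zero {A : Finset ℤ} (P : ℤ → ℤ → Fock)
    (hP : ∀ x ∈ A, ∀ y ∈ A, P x y + P y x = 0) :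
    ∑ x ∈ A, ∑ y ∈ A, P x y = 0 := by
  have h2 : (2:ℂ) • (∑ x ∈ A, ∑ y ∈ A, P x y) = 0 := by
    rw [two_smul]
    have hc : ∑ x ∈ A, ∑ y ∈ A, P x y = ∑ x ∈ A, ∑ y ∈ A, P y x := Finset.sum_comm
    nth_rewrite 2 [hc]
    simp only [← Finset.sum_add_distrib]
    exact Finset.sum_eq_zero fun x hx => Finset.sum_eq_zero fun y hy => hP x hx y hy
  have h3 : (∑ x ∈ A, ∑ y ∈ A, P x y)
      = (2:ℂ)⁻¹ • ((2:ℂ) • ∑ x ∈ A, ∑ y ∈ A, P x y) := by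
    rw [smul_smul]; norm_num
  rw [h3, h2, smul_zero]

/-- for n ≥ 3 and adjacent residues i and j = i+1 in ℤ/nℤ, the
Serre relation ⟨γ|(E_i²E_j − 2E_iE_jE_i + E_jE_i²) = 0 holds on every charged
partition basis vector of Fock space (right action: ⟨γ|E_iE_iE_j means apply
E_i, then E_i, then E_j). -/
theorem fock_E_serre_relation (n : ℕ) (hn : 3 ≤ n) (i j : ZMod n) (hj : j = i + 1)
    (γ : ChargedPartition) :
    Eop n j (Eop n i (Eop n i (Finsupp.single γ 1)))
      - (2 : ℂ) • Eop n i (Eop n j (Eop n i (Finsupp.single γ 1)))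
      + Eop n i (Eop n i (Eop n j (Finsupp.single γ 1))) = 0 := by
  obtain ⟨N, hN⟩ := γ.eventually_zero
  rw [triple_eq N hN i i j, triple_eq N hN i j i, triple_eq N hN j i i]
  have hS2 : (∑ x ∈ TS n i γ N, ∑ y ∈ TS n j γ N, ∑ z ∈ TS n i γ N, optv (C3 γ x y z))
      = ∑ x ∈ TS n i γ N, ∑ y ∈ TS n i γ N, ∑ z ∈ TS n j γ N, optv (C3 γ x z y) :=
    Finset.sum_congr rfl fun x _ => Finset.sum_comm
  have hS3 : (∑ x ∈ TS n j γ N, ∑ y ∈ TS n i γ N, ∑ z ∈ TS n i γ N, optv (C3 γ x y z))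
      = ∑ x ∈ TS n i γ N, ∑ y ∈ TS n i γ N, ∑ z ∈ TS n j γ N, optv (C3 γ z x y) := by
    rw [Finset.sum_comm]
    exact Finset.sum_congr rfl fun x _ => Finset.sum_comm
  rw [hS2, hS3, sum3_combine (fun x y z => optv (C3 γ x y z)) (fun x y z => optv (C3 γ x z y))
    (fun x y z => optv (C3 γ z x y))]
  refine double_sum_zero (fun x y => ∑ z ∈ TS n j γ N,
    ((optv (C3 γ x y z) - (2:ℂ) • optv (C3 γ x z y)) + optv (C3 γ z x y))) ?_
  intro x hx y hy
  rw [← Finset.sum_add_distrib]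
  refine Finset.sum_eq_zero fun z hz => ?_
  have := core_main hn hj (mem_TS_cast hx) (mem_TS_cast hy) (mem_TS_cast hz) γ
  simpa [Gv] using this
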